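/- Let ≽ be a convex preorder on the positive roots Φ_+ of type A^{(1)}_{e-1}, and let γ, β_1, ..., β_k ∈ Φ_+ with β_1 + ... + β_k = m·γ for some m ≥ 1. If β_1 ≽ β_2 ≽ ... ≽ β_k, then β_1 ≽ γ ≽ β_k; moreover if additionally β_1 ≻ β_k then β_1 ≻ γ ≻ β_k. -/

import Mathlib

open Finset

abbrev Node : Type := ℤ × ℤ

/-- `v` is weakly southeast of `u` (product order). -/
def SE (u v : Node) : Prop := u.1 ≤ v.1 ∧ u.2 ≤ v.2

/-- `v` is weakly northeast of `u` (`u ↗ v`). -/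
def NEr (u v : Node) : Prop := v.1 ≤ u.1 ∧ u.2 ≤ v.2

/-- `v` is strictly northeast of `u` (`u ⇗ v`). -/
def SNE (u v : Node) : Prop := v.1 < u.1 ∧ u.2 < v.2

def IsSkew (τ : Finset Node) : Prop :=
  ∀ u ∈ τ, ∀ w ∈ τ, ∀ v : Node, SE u v → SE v w → v ∈ τ

def Adj (u v : Node) : Prop :=
  v = u + (1, 0) ∨ v = u + (-1, 0) ∨ v = u + (0, 1) ∨ v = u + (0, -1)

def PathIn (τ : Finset Node) (u v : Node) : Prop :=
  Relation.ReflTransGen (fun a b => a ∈ τ ∧ b ∈ τ ∧ Adj a b) u v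

def IsConnectedShape (τ : Finset Node) : Prop :=
  ∀ u ∈ τ, ∀ v ∈ τ, PathIn τ u v

def Cornered (τ : Finset Node) : Prop :=
  (∀ u ∈ τ, ∀ u' ∈ τ, (u + (1, 0) ∉ τ ∧ u + (0, -1) ∉ τ) →
      (u' + (1, 0) ∉ τ ∧ u' + (0, -1) ∉ τ) → u = u') ∧
  (∀ v ∈ τ, ∀ v' ∈ τ, (v + (-1, 0) ∉ τ ∧ v + (0, 1) ∉ τ) →
      (v' + (-1, 0) ∉ τ ∧ v' + (0, 1) ∉ τ) → v = v')

def DiagConvex (τ : Finset Node) : Prop :=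
  ∀ u ∈ τ, ∀ w ∈ τ, ∀ v : Node,
    u.2 - u.1 = v.2 - v.1 → v.2 - v.1 = w.2 - w.1 → SE u v → SE v w → v ∈ τ

def Thin (τ : Finset Node) : Prop :=
  ∀ u ∈ τ, ∀ v ∈ τ, u.2 - u.1 = v.2 - v.1 → u = v

def IsRibbon (ξ : Finset Node) : Prop :=
  ξ.Nonempty ∧ IsSkew ξ ∧ IsConnectedShape ξ ∧ Thin ξ

def MaxSW (τ : Finset Node) (u : Node) : Prop :=
  u ∈ τ ∧ ∀ v ∈ τ, NEr v u → v = u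

def MaxNE (τ : Finset Node) (v : Node) : Prop :=
  v ∈ τ ∧ ∀ w ∈ τ, NEr v w → w = v

def IsNEPath (z : ℕ → Node) (k : ℕ) : Prop :=
  ∀ i, i + 1 < k → z (i + 1) = z i + (-1, 0) ∨ z (i + 1) = z i + (0, 1)

def IsSEPath (z : ℕ → Node) (k : ℕ) : Prop :=
  ∀ i, i + 1 < k → z (i + 1) = z i + (1, 0) ∨ z (i + 1) = z i + (0, 1)

def SERemovable (τ μ : Finset Node) : Prop :=
  μ ⊆ τ ∧ ∀ u ∈ μ, ∀ v ∈ τ \ μ, ¬ SE u v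

/-- Residue of a node, in `ZMod e`. -/
def res (e : ℕ) (u : Node) : ZMod e := ((u.2 - u.1 : ℤ) : ZMod e)

/-- Content of a finite set of nodes, as an element of the free module on `ZMod e`. -/
def cont (e : ℕ) (τ : Finset Node) : ZMod e → ℤ :=
  fun i => ((τ.filter (fun u => res e u = i)).card : ℤ)

/-- `α(t,h) = α_t + α_{t+1} + ⋯ + α_{t+h-1}` (indices mod `e`). -/
def alphaR (e : ℕ) (t : ZMod e) (h : ℕ) : ZMod e → ℤ :=
  fun i => (((Finset.range h).filter (fun j : ℕ => t + ((j : ℕ) : ZMod e) = i)).card : ℤ)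

def IsPosRoot (e : ℕ) (β : ZMod e → ℤ) : Prop :=
  ∃ t : ZMod e, ∃ h : ℕ, 1 ≤ h ∧ β = alphaR e t h

/-- The null root `δ = α_0 + ⋯ + α_{e-1}`. -/
def deltaR (e : ℕ) : ZMod e → ℤ := fun _ => 1

/-- Imaginary elements: positive multiples of `δ`. -/
def IsImag (e : ℕ) (β : ZMod e → ℤ) : Prop :=
  ∃ m : ℕ, 1 ≤ m ∧ β = fun _ => (m : ℤ)

/-- Indivisible positive roots `Ψ`: real positive roots together with `δ`. -/
def IsIndiv (e : ℕ) (β : ZMod e → ℤ) : Prop :=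
  (∃ t : ZMod e, ∃ h : ℕ, 1 ≤ h ∧ ¬ (e ∣ h) ∧ β = alphaR e t h) ∨ β = deltaR e

/-- A convex preorder on the positive roots. -/
def ConvexPreorder (e : ℕ) (R : (ZMod e → ℤ) → (ZMod e → ℤ) → Prop) : Prop :=
  (∀ β, IsPosRoot e β → R β β) ∧
  (∀ β γ ν, IsPosRoot e β → IsPosRoot e γ → IsPosRoot e ν →
      R β γ → R γ ν → R β ν) ∧
  (∀ β γ, IsPosRoot e β → IsPosRoot e γ → (R β γ ∨ R γ β)) ∧
  (∀ β γ, IsPosRoot e β → IsPosRoot e γ → R β γ → IsPosRoot e (β + γ) →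
      R β (β + γ) ∧ R (β + γ) γ) ∧
  (∀ β γ, IsPosRoot e β → IsPosRoot e γ →
      ((R β γ ∧ R γ β) ↔ (β = γ ∨ (IsImag e β ∧ IsImag e γ))))

/-- `β ≻ γ`. -/
def StrictR (e : ℕ) (R : (ZMod e → ℤ) → (ZMod e → ℤ) → Prop)
    (β γ : ZMod e → ℤ) : Prop := R β γ ∧ ¬ R γ β

/-- `θ` is a sum of positive roots strictly smaller than `β`. -/
def SumRootsLt (e : ℕ) (R : (ZMod e → ℤ) → (ZMod e → ℤ) → Prop)
    (β θ : ZMod e → ℤ) : Prop :=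
  ∃ k : ℕ, ∃ γ : Fin k → (ZMod e → ℤ),
    (∀ i, IsPosRoot e (γ i) ∧ StrictR e R β (γ i)) ∧ θ = ∑ i, γ i

/-- `θ` is a sum of positive roots strictly greater than `β`. -/
def SumRootsGt (e : ℕ) (R : (ZMod e → ℤ) → (ZMod e → ℤ) → Prop)
    (β θ : ZMod e → ℤ) : Prop :=
  ∃ k : ℕ, ∃ γ : Fin k → (ZMod e → ℤ),
    (∀ i, IsPosRoot e (γ i) ∧ StrictR e R (γ i) β) ∧ θ = ∑ i, γ i

/-- A two-tile tableau `(λ1, λ2)` for `τ`. -/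
def IsTableau2 (τ lam1 lam2 : Finset Node) : Prop :=
  IsSkew lam1 ∧ IsSkew lam2 ∧ Disjoint lam1 lam2 ∧ lam1 ∪ lam2 = τ ∧
  ∀ u ∈ lam2, ∀ v ∈ lam1, ¬ SE u v

/-- A cuspidal skew shape (with respect to the preorder `R`). -/
def IsCuspidal (e : ℕ) (R : (ZMod e → ℤ) → (ZMod e → ℤ) → Prop)
    (τ : Finset Node) : Prop :=
  IsPosRoot e (cont e τ) ∧
  ∀ lam1 lam2 : Finset Node, IsTableau2 τ lam1 lam2 →
    SumRootsLt e R (cont e τ) (cont e lam1) ∧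
    SumRootsGt e R (cont e τ) (cont e lam2)

/-- An SE-removable ribbon in `τ`. -/
def SERemRibbon (τ ξ : Finset Node) : Prop := IsRibbon ξ ∧ SERemovable τ ξ

/-- A minimal SE-removable ribbon in `τ`. -/
def MinSERem (e : ℕ) (R : (ZMod e → ℤ) → (ZMod e → ℤ) → Prop)
    (τ ξ : Finset Node) : Prop :=
  SERemRibbon τ ξ ∧ ∀ ν, SERemRibbon τ ν → R (cont e ν) (cont e ξ)


lemma alphaR_succ (e : ℕ) (t : ZMod e) (n : ℕ) :
    alphaR e t (n+1) = alphaR e t n + fun i => if t + (n : ZMod e) = i then 1 else 0 := by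
  funext i
  simp only [alphaR, Finset.range_add_one, Finset.filter_insert, Pi.add_apply]
  split_ifs with h
  · rw [Finset.card_insert_of_notMem (by simp)]; push_cast; ring
  · simp

lemma alphaR_split (e : ℕ) (t : ZMod e) (h h' : ℕ) :
    alphaR e t (h + h') = alphaR e t h + alphaR e (t + (h : ZMod e)) h' := by
  induction h' with
  | zero => funext i; simp [alphaR]
  | succ n ih =>
    rw [show h + (n+1) = (h + n) + 1 from rfl, alphaR_succ, ih, alphaR_succ]
    funext i; simp only [Pi.add_apply]; push_cast; ring_nf

lemma alphaR_nonneg (e : ℕ) (t : ZMod e) (h : ℕ) (i : ZMod e) : 0 ≤ alphaR e t h i := by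
  simp [alphaR]

lemma jump_alphaR (e : ℕ) (t : ZMod e) (h : ℕ) (v : ZMod e) :
    alphaR e t h v - alphaR e t h (v - 1)
      = (if v = t then 1 else 0) - (if v = t + (h : ZMod e) then 1 else 0) := by
  induction h with
  | zero => simp [alphaR]
  | succ n ih =>
    rw [alphaR_succ]
    simp only [Pi.add_apply]
    have e1 : ((n+1:ℕ) : ZMod e) = (n:ZMod e) + 1 := by push_cast; ring
    have c13 : (t + (n:ZMod e) = v) ↔ (v = t + (n:ZMod e)) := eq_comm
    have c24 : (t + (n:ZMod e) = v - 1) ↔ (v = t + (n:ZMod e) + 1) := by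
      rw [eq_comm, sub_eq_iff_eq_add]
    have key : (if t + (n:ZMod e) = v then (1:ℤ) else 0)
        - (if t + (n:ZMod e) = v - 1 then 1 else 0)
        = (if v = t + (n:ZMod e) then 1 else 0)
          - (if v = t + ((n+1:ℕ) : ZMod e) then 1 else 0) := by
      rw [if_congr c13 rfl rfl, if_congr c24 rfl rfl, e1, ← add_assoc]
    linarith [ih, key]

lemma alphaR_e (e : ℕ) (he : 0 < e) (t : ZMod e) : alphaR e t e = fun _ => 1 := by
  haveI : NeZero e := ⟨he.ne'⟩
  funext i
  simp only [alphaR]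
  norm_cast
  rw [show ((Finset.range e).filter (fun j : ℕ => t + ((j : ℕ) : ZMod e) = i)) = {(i - t).val} from ?_]
  · simp
  · ext j
    simp only [Finset.mem_filter, Finset.mem_range, Finset.mem_singleton]
    constructor
    · rintro ⟨hj, hji⟩
      have : ((j : ℕ) : ZMod e) = i - t := by rw [← hji]; ring
      rw [← this, ZMod.val_cast_of_lt hj]
    · rintro rfl
      refine ⟨ZMod.val_lt _, ?_⟩
      rw [ZMod.natCast_val, ZMod.cast_id]
      ring

lemma alphaR_const (e : ℕ) (he : 0 < e) (t : ZMod e) (q : ℕ) :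
    alphaR e t (q * e) = fun _ => (q : ℤ) := by
  induction q generalizing t with
  | zero => funext i; simp [alphaR]
  | succ n ih =>
    have : (n + 1) * e = n * e + e := by ring
    rw [this, alphaR_split, ih, alphaR_e e he]
    funext i; simp only [Pi.add_apply]; push_cast; ring

lemma alphaR_sum_values (e : ℕ) (he : 0 < e) (t : ZMod e) (h : ℕ) :
    haveI : NeZero e := ⟨he.ne'⟩
    ∑ i : ZMod e, alphaR e t h i = h := by
  haveI : NeZero e := ⟨he.ne'⟩
  induction h with
  | zero => simp [alphaR]
  | succ n ih =>
    rw [alphaR_succ]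
    simp only [Pi.add_apply, Finset.sum_add_distrib, ih]
    rw [Finset.sum_ite_eq Finset.univ (t + (n:ZMod e)) (fun _ => (1:ℤ))]
    simp

open Classical in
noncomputable def startOf (e : ℕ) (x : ZMod e → ℤ) : ZMod e :=
  if hx : IsPosRoot e x then hx.choose else 0

open Classical in
noncomputable def lenOf (e : ℕ) (x : ZMod e → ℤ) : ℕ :=
  if hx : IsPosRoot e x then hx.choose_spec.choose else 0

lemma root_spec {e : ℕ} {x : ZMod e → ℤ} (hx : IsPosRoot e x) :
    1 ≤ lenOf e x ∧ x = alphaR e (startOf e x) (lenOf e x) := by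
  simp only [startOf, lenOf, dif_pos hx]
  exact hx.choose_spec.choose_spec

noncomputable def endOf (e : ℕ) (x : ZMod e → ℤ) : ZMod e :=
  startOf e x + (lenOf e x : ZMod e)

lemma multiset_sum_apply {e : ℕ} (s : Multiset (ZMod e → ℤ)) (v : ZMod e) :
    s.sum v = (s.map (fun x => x v)).sum := by
  induction s using Multiset.induction with
  | empty => simp
  | cons a t ih => simp [ih]

lemma exists_pos_of_sum_pos {α : Type*} (s : Multiset α) (f : α → ℤ)
    (hpos : 0 < (s.map f).sum) : ∃ x ∈ s, f x ≠ 0 := by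
  by_contra hc
  push_neg at hc
  have : (s.map f).sum = 0 := by
    apply Multiset.sum_eq_zero
    intro z hz
    obtain ⟨x, hx, rfl⟩ := Multiset.mem_map.mp hz
    exact hc x hx
  omega

lemma const_pos_root (e : ℕ) (he : 0 < e) (q : ℕ) (hq : 1 ≤ q) :
    IsPosRoot e (fun _ => (q : ℤ)) := by
  refine ⟨0, q * e, Nat.mul_pos hq (by omega), ?_⟩
  rw [alphaR_const e he]

lemma const_imag (e : ℕ) (q : ℕ) (hq : 1 ≤ q) : IsImag e (fun _ => (q : ℤ)) := ⟨q, hq, rfl⟩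

lemma const_eq_alphaR (e : ℕ) (he : 0 < e) (t : ZMod e) {h : ℕ} (hd : e ∣ h) :
    (fun _ => ((h / e : ℕ) : ℤ)) = alphaR e t h := by
  conv_rhs => rw [← Nat.div_mul_cancel hd]
  rw [alphaR_const e he]

lemma imag_of_dvd (e : ℕ) (he : 0 < e) {x : ZMod e → ℤ} (hx : IsPosRoot e x)
    (hd : e ∣ lenOf e x) : IsImag e x := by
  obtain ⟨hlen, hrep⟩ := root_spec hx
  refine ⟨lenOf e x / e, Nat.one_le_div_iff he |>.mpr (Nat.le_of_dvd (by omega) hd), ?_⟩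
  rw [const_eq_alphaR e he (startOf e x) hd]
  exact hrep

lemma sum_map_nonneg {α : Type*} (s : Multiset α) (f : α → ℤ)
    (h : ∀ x ∈ s, 0 ≤ f x) : 0 ≤ (s.map f).sum := by
  apply Multiset.sum_nonneg
  intro z hz
  obtain ⟨x, hx, rfl⟩ := Multiset.mem_map.mp hz
  exact h x hx

lemma mem_le_sum_map {α : Type*} (s : Multiset α) (f : α → ℤ)
    (h : ∀ x ∈ s, 0 ≤ f x) {x : α} (hx : x ∈ s) : f x ≤ (s.map f).sum := by
  apply Multiset.single_le_sum
  · intro z hz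
    obtain ⟨y, hy, rfl⟩ := Multiset.mem_map.mp hz
    exact h y hy
  · exact Multiset.mem_map_of_mem f hx

lemma strict_chain {e : ℕ} {R : (ZMod e → ℤ) → (ZMod e → ℤ) → Prop}
    (hR : ConvexPreorder e R) {a b c : ZMod e → ℤ}
    (ha : IsPosRoot e a) (hb : IsPosRoot e b) (hc : IsPosRoot e c)
    (h1 : StrictR e R a b) (h2 : R b c) : StrictR e R a c := by
  obtain ⟨-, htrans, -, -, -⟩ := hR
  refine ⟨htrans a b c ha hb hc h1.1 h2, fun hca => h1.2 ?_⟩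
  exact htrans b c a hb hc ha h2 hca

lemma strict_add {e : ℕ} {R : (ZMod e → ℤ) → (ZMod e → ℤ) → Prop}
    (hR : ConvexPreorder e R) {g x y : ZMod e → ℤ}
    (hg : IsPosRoot e g) (hx : IsPosRoot e x) (hy : IsPosRoot e y)
    (hsx : StrictR e R g x) (hsy : StrictR e R g y)
    (hxy : IsPosRoot e (x + y)) : StrictR e R g (x + y) := by
  obtain ⟨hrefl, htrans, htot, hconv, hequiv⟩ := hR
  rcases htot x y hx hy with hle | hle
  · obtain ⟨h1, h2⟩ := hconv x y hx hy hle hxy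
    refine ⟨htrans g x (x+y) hg hx hxy hsx.1 h1, fun hc => hsx.2 ?_⟩
    exact htrans x (x+y) g hx hxy hg h1 hc
  · have hyx : IsPosRoot e (y + x) := by rwa [add_comm]
    obtain ⟨h1, h2⟩ := hconv y x hy hx hle hyx
    rw [add_comm]
    refine ⟨htrans g y (y+x) hg hy hyx hsy.1 h1, fun hc => hsy.2 ?_⟩
    exact htrans y (y+x) g hy hyx hg h1 hc


noncomputable def SaF (e : ℕ) (s : Multiset (ZMod e → ℤ)) (v : ZMod e) : ℤ :=
  (s.map (fun x => if v = startOf e x then (1:ℤ) else 0)).sum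

noncomputable def SbF (e : ℕ) (s : Multiset (ZMod e → ℤ)) (v : ZMod e) : ℤ :=
  (s.map (fun x => if v = endOf e x then (1:ℤ) else 0)).sum

lemma SaF_nonneg (e : ℕ) (s : Multiset (ZMod e → ℤ)) (v : ZMod e) : 0 ≤ SaF e s v :=
  sum_map_nonneg _ _ (by intro x _; split <;> omega)

lemma SbF_nonneg (e : ℕ) (s : Multiset (ZMod e → ℤ)) (v : ZMod e) : 0 ≤ SbF e s v :=
  sum_map_nonneg _ _ (by intro x _; split <;> omega)

lemma SaF_ge_one (e : ℕ) (s : Multiset (ZMod e → ℤ)) {x : ZMod e → ℤ} (hx : x ∈ s) :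
    1 ≤ SaF e s (startOf e x) := by
  have := mem_le_sum_map s (fun y => if startOf e x = startOf e y then (1:ℤ) else 0)
    (by intro y _; split <;> omega) hx
  simpa [SaF] using this

lemma SbF_ge_one (e : ℕ) (s : Multiset (ZMod e → ℤ)) {x : ZMod e → ℤ} (hx : x ∈ s) :
    1 ≤ SbF e s (endOf e x) := by
  have := mem_le_sum_map s (fun y => if endOf e x = endOf e y then (1:ℤ) else 0)
    (by intro y _; split <;> omega) hx
  simpa [SbF] using this

lemma SaF_exists (e : ℕ) (s : Multiset (ZMod e → ℤ)) (v : ZMod e) (h : SaF e s v ≠ 0) :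
    ∃ x ∈ s, v = startOf e x := by
  obtain ⟨x, hx, hfx⟩ := exists_pos_of_sum_pos s _ (lt_of_le_of_ne (SaF_nonneg e s v) (Ne.symm h))
  refine ⟨x, hx, ?_⟩
  by_contra hc
  simp [hc] at hfx

lemma SbF_exists (e : ℕ) (s : Multiset (ZMod e → ℤ)) (v : ZMod e) (h : SbF e s v ≠ 0) :
    ∃ x ∈ s, v = endOf e x := by
  obtain ⟨x, hx, hfx⟩ := exists_pos_of_sum_pos s _ (lt_of_le_of_ne (SbF_nonneg e s v) (Ne.symm h))
  refine ⟨x, hx, ?_⟩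
  by_contra hc
  simp [hc] at hfx

lemma key_lemma (e : ℕ) (he : 1 < e) (R : (ZMod e → ℤ) → (ZMod e → ℤ) → Prop)
    (hR : ConvexPreorder e R) (γ' : ZMod e → ℤ) (hγ' : IsPosRoot e γ') :
    ∀ n : ℕ, ∀ s : Multiset (ZMod e → ℤ), Multiset.card s = n → s ≠ 0 →
      (∀ x ∈ s, IsPosRoot e x ∧ StrictR e R γ' x) →
      ∀ m : ℕ, 1 ≤ m → s.sum ≠ m • γ' := by
  haveI : NeZero e := ⟨by omega⟩
  have he0 : 0 < e := by omega
  obtain ⟨hrefl, htrans, htot, hconv, hequiv⟩ := hR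
  have hRc : ConvexPreorder e R := ⟨hrefl, htrans, htot, hconv, hequiv⟩
  intro n
  induction n using Nat.strong_induction_on with
  | _ n IH =>
  intro s hcard hne hall m hm hsum
  by_cases hpair : ∃ x y t, s = x ::ₘ y ::ₘ t ∧ IsPosRoot e (x + y)
  · -- merge the compatible pair and recurse
    obtain ⟨x, y, t, rfl, hxy⟩ := hpair
    have hx := hall x (by simp)
    have hy := hall y (by simp [Multiset.mem_cons])
    have hsxy : StrictR e R γ' (x + y) :=
      strict_add hRc hγ' hx.1 hy.1 hx.2 hy.2 hxy
    have hlt : Multiset.card ((x + y) ::ₘ t) < n := by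
      simp only [Multiset.card_cons] at hcard ⊢
      omega
    refine IH _ hlt ((x + y) ::ₘ t) rfl (by simp) ?_ m hm ?_
    · intro z hz
      rcases Multiset.mem_cons.mp hz with rfl | hzt
      · exact ⟨hxy, hsxy⟩
      · exact hall z (by simp [Multiset.mem_cons, hzt])
    · rw [Multiset.sum_cons] at hsum ⊢
      rw [Multiset.sum_cons] at hsum
      rw [← hsum]; ring
  · -- no compatible pair
    push_neg at hpair
    have hnop : ∀ x ∈ s, ∀ y ∈ s.erase x, ¬ IsPosRoot e (x + y) := by
      intro x hx y hy
      obtain ⟨t, ht⟩ := Multiset.exists_cons_of_mem hy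
      exact hpair x y t (by rw [← Multiset.cons_erase hx, ht])
    have hγroot : IsPosRoot e γ' := hγ'
    obtain ⟨t0, h0, hh0, hγeq⟩ := hγ'
    -- the jump equation
    have hjump : ∀ v : ZMod e, SaF e s v - SbF e s v
        = m * ((if v = t0 then (1:ℤ) else 0) - (if v = t0 + (h0:ZMod e) then 1 else 0)) := by
      intro v
      have h1 : s.sum v - s.sum (v - 1) = m * (γ' v - γ' (v-1)) := by
        rw [hsum]
        simp only [Pi.smul_apply, nsmul_eq_mul]
        ring
      rw [multiset_sum_apply, multiset_sum_apply, ← Multiset.sum_map_sub] at h1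
      have h2 : (s.map (fun x => x v - x (v-1))).sum
          = (s.map (fun x => (if v = startOf e x then (1:ℤ) else 0)
              - (if v = endOf e x then 1 else 0))).sum := by
        apply congrArg
        apply Multiset.map_congr rfl
        intro x hx
        obtain ⟨hl, hr⟩ := root_spec (hall x hx).1
        conv_lhs => rw [hr]
        rw [jump_alphaR]
        rfl
      rw [h2, Multiset.sum_map_sub] at h1
      rw [hγeq, jump_alphaR] at h1
      exact h1
    have hn1 : 1 ≤ n := by
      rcases Nat.eq_zero_or_pos n with rfl | h
      · exact absurd (Multiset.card_eq_zero.mp hcard) hne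
      · exact h
    rcases Nat.lt_or_ge n 2 with h2 | h2
    · -- n = 1
      have hcard1 : Multiset.card s = 1 := by omega
      obtain ⟨x, rfl⟩ := Multiset.card_eq_one.mp hcard1
      have hx := hall x (by simp)
      obtain ⟨hlx, hrx⟩ := root_spec hx.1
      by_cases himg : t0 + (h0 : ZMod e) = t0
      · -- γ' imaginary; then x imaginary too, contradiction with strictness
        have hxj : ∀ v, (if v = startOf e x then (1:ℤ) else 0)
            - (if v = endOf e x then 1 else 0) = 0 := by
          intro v
          have := hjump v
          simp only [SaF, SbF, Multiset.map_singleton, Multiset.sum_singleton, himg] at this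
          simpa using this
        have hse : startOf e x = endOf e x := by
          have := hxj (startOf e x)
          by_contra hc
          simp [hc] at this
        have hxdvd : e ∣ lenOf e x := by
          have h' := hse
          simp only [endOf] at h'
          exact (ZMod.natCast_eq_zero_iff _ _).mp (left_eq_add.mp h')
        have hγdvd : e ∣ h0 := by
          exact (ZMod.natCast_eq_zero_iff _ _).mp (add_eq_left.mp himg)
        have himx : IsImag e x := imag_of_dvd e he0 hx.1 hxdvd
        have himγ : IsImag e γ' := by
          refine ⟨h0 / e, Nat.one_le_div_iff he0 |>.mpr (Nat.le_of_dvd (by omega) hγdvd), ?_⟩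
          rw [const_eq_alphaR e he0 t0 hγdvd]
          exact hγeq
        exact hx.2.2 ((hequiv x γ' hx.1 hγroot).mpr (Or.inr ⟨himx, himγ⟩)).1
      · -- γ' real; jump at t0 forces m = 1 and x = γ'
        have := hjump t0
        simp only [SaF, SbF, Multiset.map_singleton, Multiset.sum_singleton, if_pos rfl,
          if_neg (Ne.symm himg)] at this
        norm_num at this
        have hm1 : m = 1 := by
          have hle : (if t0 = startOf e x then (1:ℤ) else 0)
              - (if t0 = endOf e x then 1 else 0) ≤ 1 := by
            split <;> split <;> omega
          have hge : (1:ℤ) ≤ (m:ℤ) := by exact_mod_cast hm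
          have hmz : (m:ℤ) = 1 := by linarith [this, hle, hge]

          exact_mod_cast hmz
        have : x = γ' := by
          have := hsum
          simp only [Multiset.sum_singleton, hm1, one_smul] at this
          exact this
        rw [this] at hx
        exact hx.2.2 (hrefl γ' hγroot)
    · -- n ≥ 2
      -- all elements are real roots
      have hreal : ∀ x ∈ s, ¬ (e ∣ lenOf e x) := by
        intro x hxs hdvd
        have hcer : Multiset.card (s.erase x) = n - 1 := by
          rw [Multiset.card_erase_of_mem hxs, hcard]
          rfl
        have hern : s.erase x ≠ 0 := by
          intro h0'
          rw [h0'] at hcer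
          simp at hcer
          omega
        obtain ⟨y, hy⟩ := Multiset.exists_mem_of_ne_zero hern
        have hys : y ∈ s := Multiset.mem_of_mem_erase hy
        obtain ⟨hly, hry⟩ := root_spec (hall y hys).1
        obtain ⟨hlxx, hrxx⟩ := root_spec (hall x hxs).1
        have hxconst : x = alphaR e (startOf e y + ((lenOf e y : ℕ) : ZMod e)) (lenOf e x) :=
          calc x = alphaR e (startOf e x) (lenOf e x) := hrxx
            _ = fun _ => ((lenOf e x / e : ℕ) : ℤ) := (const_eq_alphaR e he0 _ hdvd).symm
            _ = alphaR e (startOf e y + ((lenOf e y : ℕ) : ZMod e)) (lenOf e x) :=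
                const_eq_alphaR e he0 _ hdvd
        have hyx : IsPosRoot e (y + x) := by
          refine ⟨startOf e y, lenOf e y + lenOf e x, by omega, ?_⟩
          rw [alphaR_split, ← hry, ← hxconst]
        exact hnop x hxs y hy (by rwa [add_comm] at hyx)
      -- starts and ends are disjoint
      have hdisj : ∀ v : ZMod e, SaF e s v = 0 ∨ SbF e s v = 0 := by
        intro v
        by_contra hc
        push_neg at hc
        obtain ⟨x, hxs, hvx⟩ := SaF_exists e s v hc.1
        obtain ⟨y, hys, hvy⟩ := SbF_exists e s v hc.2
        have hxy : x ≠ y := by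
          rintro rfl
          apply hreal x hxs
          have hse : startOf e x = endOf e x := by rw [← hvx, hvy]
          simp only [endOf] at hse
          exact (ZMod.natCast_eq_zero_iff _ _).mp (left_eq_add.mp hse)
        obtain ⟨hlx2, hrx2⟩ := root_spec (hall x hxs).1
        obtain ⟨hly2, hry2⟩ := root_spec (hall y hys).1
        apply hnop y hys x ((Multiset.mem_erase_of_ne hxy).mpr hxs)
        have hxeq : x = alphaR e (startOf e y + ((lenOf e y : ℕ) : ZMod e)) (lenOf e x) := by
          have hst : startOf e x = startOf e y + ((lenOf e y : ℕ) : ZMod e) := by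
            rw [← hvx, hvy]
            rfl
          rw [hst] at hrx2
          exact hrx2
        refine ⟨startOf e y, lenOf e y + lenOf e x, by omega, ?_⟩
        rw [alphaR_split, ← hry2, ← hxeq]
      by_cases himg : t0 + (h0 : ZMod e) = t0
      · -- γ' imaginary: immediate contradiction
        obtain ⟨x0, hx0⟩ := Multiset.exists_mem_of_ne_zero hne
        have h1 : 1 ≤ SaF e s (startOf e x0) := SaF_ge_one e s hx0
        have hj := hjump (startOf e x0)
        rw [himg, sub_self, mul_zero] at hj
        rcases hdisj (startOf e x0) with h | h
        · linarith
        · linarith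
      · -- γ' real
        have hSb_a : SbF e s t0 = 0 := by
          have hj := hjump t0
          rw [if_pos rfl, if_neg (Ne.symm himg)] at hj
          rcases hdisj t0 with h | h
          · exfalso
            have hnn := SbF_nonneg e s t0
            have hge : (1:ℤ) ≤ (m:ℤ) := by exact_mod_cast hm
            rw [h] at hj
            linarith
          · exact h
        have hSa_a : SaF e s t0 = (m:ℤ) := by
          have hj := hjump t0
          rw [if_pos rfl, if_neg (Ne.symm himg)] at hj
          rw [hSb_a] at hj
          linarith
        have hSa_b : SaF e s (t0 + (h0:ZMod e)) = 0 := by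
          have hj := hjump (t0 + (h0:ZMod e))
          rw [if_neg himg, if_pos rfl] at hj
          rcases hdisj (t0 + (h0:ZMod e)) with h | h
          · exact h
          · exfalso
            have hnn := SaF_nonneg e s (t0 + (h0:ZMod e))
            have hge : (1:ℤ) ≤ (m:ℤ) := by exact_mod_cast hm
            rw [h] at hj
            linarith
        have hSb_b : SbF e s (t0 + (h0:ZMod e)) = (m:ℤ) := by
          have hj := hjump (t0 + (h0:ZMod e))
          rw [if_neg himg, if_pos rfl] at hj
          rw [hSa_b] at hj
          linarith
        have hSa_other : ∀ v, v ≠ t0 → SaF e s v = 0 := by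
          intro v hv
          by_cases hvb : v = t0 + (h0:ZMod e)
          · rw [hvb]; exact hSa_b
          · have hj := hjump v
            rw [if_neg hv, if_neg hvb] at hj
            rcases hdisj v with h | h
            · exact h
            · rw [h] at hj; linarith
        have hSb_other : ∀ v, v ≠ t0 + (h0:ZMod e) → SbF e s v = 0 := by
          intro v hv
          by_cases hva : v = t0
          · rw [hva]; exact hSb_a
          · have hj := hjump v
            rw [if_neg hva, if_neg hv] at hj
            rcases hdisj v with h | h
            · rw [h] at hj; linarith
            · exact h
        have hstart : ∀ x ∈ s, startOf e x = t0 := by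
          intro x hxs
          by_contra hc
          have h1 := SaF_ge_one e s hxs
          rw [hSa_other _ hc] at h1
          linarith
        have hend : ∀ x ∈ s, endOf e x = t0 + (h0:ZMod e) := by
          intro x hxs
          by_contra hc
          have h1 := SbF_ge_one e s hxs
          rw [hSb_other _ hc] at h1
          linarith
        have hmod : ∀ x ∈ s, lenOf e x ≡ h0 [MOD e] := by
          intro x hxs
          have h1 : ((lenOf e x : ℕ) : ZMod e) = ((h0 : ℕ) : ZMod e) := by
            have h2' := hend x hxs
            simp only [endOf, hstart x hxs] at h2'
            exact add_left_cancel h2'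
          exact (ZMod.natCast_eq_natCast_iff _ _ _).mp h1
        have hform : ∀ x ∈ s, (∃ q:ℕ, 1 ≤ q ∧ x = γ' + fun _ => (q:ℤ)) ∨
            (∃ q:ℕ, 1 ≤ q ∧ γ' = x + fun _ => (q:ℤ)) := by
          intro x hxs
          obtain ⟨hlx3, hrx3⟩ := root_spec (hall x hxs).1
          have hrx4 : x = alphaR e t0 (lenOf e x) := by
            rw [hstart x hxs] at hrx3
            exact hrx3
          rcases lt_trichotomy (lenOf e x) h0 with hlt | heq | hgt
          · right
            have hd : e ∣ (h0 - lenOf e x) :=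
              (Nat.modEq_iff_dvd' (le_of_lt hlt)).mp (hmod x hxs)
            refine ⟨(h0 - lenOf e x)/e,
              Nat.one_le_div_iff he0 |>.mpr (Nat.le_of_dvd (by omega) hd), ?_⟩
            have hsplit : h0 = lenOf e x + (h0 - lenOf e x) := by omega
            calc γ' = alphaR e t0 h0 := hγeq
              _ = alphaR e t0 (lenOf e x)
                  + alphaR e (t0 + ((lenOf e x : ℕ) : ZMod e)) (h0 - lenOf e x) := by
                conv_lhs => rw [hsplit]
                rw [alphaR_split]
              _ = x + fun _ => (((h0 - lenOf e x)/e : ℕ) : ℤ) := by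
                rw [← const_eq_alphaR e he0 (t0 + ((lenOf e x : ℕ) : ZMod e)) hd, ← hrx4]
          · exfalso
            have hxγ : x = γ' := by rw [hrx4, heq, ← hγeq]
            exact (hall x hxs).2.2 (by rw [hxγ]; exact hrefl γ' hγroot)
          · left
            have hd : e ∣ (lenOf e x - h0) :=
              (Nat.modEq_iff_dvd' (le_of_lt hgt)).mp (hmod x hxs).symm
            refine ⟨(lenOf e x - h0)/e,
              Nat.one_le_div_iff he0 |>.mpr (Nat.le_of_dvd (by omega) hd), ?_⟩
            have hsplit : lenOf e x = h0 + (lenOf e x - h0) := by omega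
            calc x = alphaR e t0 (lenOf e x) := hrx4
              _ = alphaR e t0 h0 + alphaR e (t0 + ((h0 : ℕ) : ZMod e)) (lenOf e x - h0) := by
                conv_lhs => rw [hsplit]
                rw [alphaR_split]
              _ = γ' + fun _ => (((lenOf e x - h0)/e : ℕ) : ℤ) := by
                rw [← const_eq_alphaR e he0 (t0 + ((h0 : ℕ) : ZMod e)) hd, ← hγeq]
        have hcardm : (n:ℤ) = (m:ℤ) := by
          have hmapc : (s.map (fun x => if t0 = startOf e x then (1:ℤ) else 0))
              = s.map (fun _ => (1:ℤ)) :=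
            Multiset.map_congr rfl (by intro x hxs; rw [if_pos (hstart x hxs).symm])
          have h1 : SaF e s t0 = (n:ℤ) := by
            rw [SaF, hmapc, Multiset.map_const', Multiset.sum_replicate, hcard]
            simp
          rw [h1] at hSa_a
          exact hSa_a
        have hgsum : (s.map (fun x => x t0 - γ' t0)).sum = 0 := by
          rw [Multiset.sum_map_sub, ← multiset_sum_apply, hsum]
          have h1 : (s.map (fun _ => γ' t0)).sum = (n:ℤ) * γ' t0 := by
            rw [Multiset.map_const', Multiset.sum_replicate, hcard]
            simp [nsmul_eq_mul]
          rw [h1]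
          simp only [Pi.smul_apply, nsmul_eq_mul]
          rw [hcardm]
          ring
        have hsigns : ∀ x ∈ s, x t0 - γ' t0 ≠ 0 := by
          intro x hxs
          rcases hform x hxs with ⟨q, hq, hxe⟩ | ⟨q, hq, hxe⟩
          · have h1 : x t0 = γ' t0 + (q:ℤ) := by rw [hxe]; rfl
            have h2' : (1:ℤ) ≤ (q:ℤ) := by exact_mod_cast hq
            intro hc
            rw [h1] at hc
            linarith
          · have h1 : γ' t0 = x t0 + (q:ℤ) := by rw [hxe]; rfl
            have h2' : (1:ℤ) ≤ (q:ℤ) := by exact_mod_cast hq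
            intro hc
            rw [h1] at hc
            linarith
        have hexneg : ∃ x ∈ s, x t0 - γ' t0 < 0 := by
          by_contra hc
          push_neg at hc
          obtain ⟨x0, hx0⟩ := Multiset.exists_mem_of_ne_zero hne
          have h1 : (0:ℤ) < x0 t0 - γ' t0 :=
            lt_of_le_of_ne (hc x0 hx0) (Ne.symm (hsigns x0 hx0))
          have h2' := mem_le_sum_map s (fun x => x t0 - γ' t0) hc hx0
          rw [hgsum] at h2'
          have h2'' : x0 t0 - γ' t0 ≤ (0:ℤ) := h2'
          linarith
        have hexpos : ∃ x ∈ s, 0 < x t0 - γ' t0 := by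
          by_contra hc
          push_neg at hc
          obtain ⟨x0, hx0, hneg⟩ := hexneg
          have h2' := mem_le_sum_map s (fun x => γ' t0 - x t0)
            (fun x hxm => by show (0:ℤ) ≤ γ' t0 - x t0; linarith [hc x hxm]) hx0
          have h2''' : γ' t0 - x0 t0 ≤ (s.map (fun x => γ' t0 - x t0)).sum := h2'
          have h3 : (s.map (fun x => γ' t0 - x t0)).sum
              = (s.map (fun _ => γ' t0)).sum - (s.map (fun x => x t0)).sum := by
            rw [← Multiset.sum_map_sub]
          have h4 : (s.map (fun x => x t0 - γ' t0)).sum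
              = (s.map (fun x => x t0)).sum - (s.map (fun _ => γ' t0)).sum := by
            rw [← Multiset.sum_map_sub]
          rw [h4] at hgsum
          rw [h3] at h2'''
          linarith
        obtain ⟨xp, hxp, hxppos⟩ := hexpos
        obtain ⟨xn, hxn, hxnneg⟩ := hexneg
        have hproot := (hall xp hxp).1
        have hnroot := (hall xn hxn).1
        obtain ⟨p, hp1, hpe⟩ : ∃ q:ℕ, 1 ≤ q ∧ xp = γ' + fun _ => (q:ℤ) := by
          rcases hform xp hxp with h | ⟨q, hq, hxe⟩
          · exact h
          · exfalso
            have h1 : γ' t0 = xp t0 + (q:ℤ) := by rw [hxe]; rfl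
            have h2' : (1:ℤ) ≤ (q:ℤ) := by exact_mod_cast hq
            linarith
        obtain ⟨q, hq1, hqe⟩ : ∃ q:ℕ, 1 ≤ q ∧ γ' = xn + fun _ => (q:ℤ) := by
          rcases hform xn hxn with ⟨q, hq, hxe⟩ | h
          · exfalso
            have h1 : xn t0 = γ' t0 + (q:ℤ) := by rw [hxe]; rfl
            have h2' : (1:ℤ) ≤ (q:ℤ) := by exact_mod_cast hq
            linarith
          · exact h
        have hpδ : IsPosRoot e (fun _ => (p:ℤ)) := const_pos_root e he0 p hp1
        have hqδ : IsPosRoot e (fun _ => (q:ℤ)) := const_pos_root e he0 q hq1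
        have hRδγ : R (fun _ => (q:ℤ)) γ' := by
          rcases htot xn (fun _ => (q:ℤ)) hnroot hqδ with h | h
          · exfalso
            have hsum2 : IsPosRoot e (xn + fun _ => (q:ℤ)) := by
              rw [← hqe]; exact hγroot
            have h5 := (hconv xn _ hnroot hqδ h hsum2).1
            rw [← hqe] at h5
            exact (hall xn hxn).2.2 h5
          · have hsum2 : IsPosRoot e ((fun _ => (q:ℤ)) + xn) := by
              rw [add_comm, ← hqe]; exact hγroot
            have h5 := (hconv _ xn hqδ hnroot h hsum2).1
            rwa [add_comm, ← hqe] at h5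
        have hRγδ : R γ' (fun _ => (p:ℤ)) := by
          rcases htot γ' (fun _ => (p:ℤ)) hγroot hpδ with h | h
          · exact h
          · exfalso
            have hsum2 : IsPosRoot e ((fun _ => (p:ℤ)) + γ') := by
              rw [add_comm, ← hpe]; exact hproot
            have h5 := (hconv _ γ' hpδ hγroot h hsum2).2
            rw [add_comm, ← hpe] at h5
            exact (hall xp hxp).2.2 h5
        have hδδ : R (fun _ => (p:ℤ)) (fun _ => (q:ℤ)) :=
          ((hequiv _ _ hpδ hqδ).mpr (Or.inr ⟨const_imag e p hp1, const_imag e q hq1⟩)).1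
        have hRγq : R γ' (fun _ => (q:ℤ)) := htrans _ _ _ hγroot hpδ hqδ hRγδ hδδ
        have hfin := (hequiv γ' _ hγroot hqδ).mp ⟨hRγq, hRδγ⟩
        have hconst : ∃ c : ℤ, ∀ v, γ' v = c := by
          rcases hfin with heqq | ⟨⟨m', hm', hem⟩, -⟩
          · exact ⟨(q:ℤ), fun v => by rw [heqq]⟩
          · exact ⟨(m':ℤ), fun v => by rw [hem]⟩
        obtain ⟨c, hc⟩ := hconst
        have hj := jump_alphaR e t0 h0 t0
        rw [← hγeq, hc t0, hc (t0 - 1), if_pos rfl, if_neg (Ne.symm himg)] at hj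
        norm_num at hj

lemma flip_convex {e : ℕ} {R : (ZMod e → ℤ) → (ZMod e → ℤ) → Prop}
    (hR : ConvexPreorder e R) : ConvexPreorder e (fun a b => R b a) := by
  obtain ⟨hrefl, htrans, htot, hconv, hequiv⟩ := hR
  refine ⟨fun β hβ => hrefl β hβ,
    fun β γ ν hβ hγ hν h1 h2 => htrans ν γ β hν hγ hβ h2 h1,
    fun β γ hβ hγ => (htot β γ hβ hγ).symm,
    fun β γ hβ hγ h hr => ?_,
    fun β γ hβ hγ => ?_⟩
  · have := hconv γ β hγ hβ h (by rwa [add_comm])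
    rw [add_comm γ β] at this
    exact ⟨this.2, this.1⟩
  · show R γ β ∧ R β γ ↔ _
    rw [hequiv γ β hγ hβ]
    constructor
    · rintro (h | ⟨h1, h2⟩)
      · exact Or.inl h.symm
      · exact Or.inr ⟨h2, h1⟩
    · rintro (h | ⟨h1, h2⟩)
      · exact Or.inl h.symm
      · exact Or.inr ⟨h2, h1⟩

lemma root_val_sum {e : ℕ} (he0 : 0 < e) {x : ZMod e → ℤ} (hx : IsPosRoot e x) :
    haveI : NeZero e := ⟨he0.ne'⟩
    1 ≤ ∑ v : ZMod e, x v := by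
  haveI : NeZero e := ⟨he0.ne'⟩
  obtain ⟨hl, hr⟩ := root_spec hx
  rw [hr, alphaR_sum_values e he0]
  exact_mod_cast hl

lemma half_lemma (e : ℕ) (he : 1 < e)
    (R : (ZMod e → ℤ) → (ZMod e → ℤ) → Prop) (hR : ConvexPreorder e R)
    (k m : ℕ) (hm : 1 ≤ m) (γ : ZMod e → ℤ) (hγ : IsPosRoot e γ)
    (β : Fin (k + 1) → (ZMod e → ℤ)) (hβ : ∀ i, IsPosRoot e (β i))
    (hsum : ∑ i, β i = m • γ)
    (hchain : ∀ i j : Fin (k + 1), i ≤ j → R (β i) (β j)) :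
    R (β 0) γ ∧
    (StrictR e R (β 0) (β (Fin.last k)) → StrictR e R (β 0) γ) := by
  classical
  haveI : NeZero e := ⟨by omega⟩
  have he0 : 0 < e := by omega
  obtain ⟨hrefl, htrans, htot, hconv, hequiv⟩ := hR
  have hRc : ConvexPreorder e R := ⟨hrefl, htrans, htot, hconv, hequiv⟩
  have hssum : (Finset.univ.val.map β).sum = m • γ := hsum
  have hsne : (Finset.univ.val.map β) ≠ 0 := by
    intro h
    rw [Multiset.map_eq_zero, Finset.val_eq_zero] at h
    exact absurd (h ▸ Finset.mem_univ (0 : Fin (k+1))) (Finset.notMem_empty _)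
  have partA : R (β 0) γ := by
    by_contra h1
    have h2 : R γ (β 0) := (htot _ _ (hβ 0) hγ).resolve_left h1
    have hstr : ∀ i, StrictR e R γ (β i) := fun i =>
      ⟨htrans _ _ _ hγ (hβ 0) (hβ i) h2 (hchain 0 i (Fin.zero_le i)),
        fun hc => h1 (htrans _ _ _ (hβ 0) (hβ i) hγ (hchain 0 i (Fin.zero_le i)) hc)⟩
    refine key_lemma e he R hRc γ hγ _ (Finset.univ.val.map β) rfl hsne ?_ m hm hssum
    intro x hx
    obtain ⟨i, _, rfl⟩ := Multiset.mem_map.mp hx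
    exact ⟨hβ i, hstr i⟩
  refine ⟨partA, fun hstrict => ⟨partA, fun hs => ?_⟩⟩
  -- suppose R γ (β 0); derive a contradiction
  have hγi : ∀ i, R γ (β i) := fun i =>
    htrans _ _ _ hγ (hβ 0) (hβ i) hs (hchain 0 i (Fin.zero_le i))
  have hlast : ¬ R (β (Fin.last k)) γ := fun hc =>
    hstrict.2 (htrans _ _ _ (hβ _) hγ (hβ 0) hc hs)
  set T : Finset (Fin (k+1)) := Finset.univ.filter (fun i => ¬ R (β i) γ) with hTdef
  have hlastT : Fin.last k ∈ T := by
    rw [hTdef, Finset.mem_filter]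
    exact ⟨Finset.mem_univ _, hlast⟩
  have hTne : (T.val.map β) ≠ 0 := by
    intro h
    rw [Multiset.map_eq_zero, Finset.val_eq_zero] at h
    exact absurd (h ▸ hlastT) (Finset.notMem_empty _)
  have hTstrict : ∀ i ∈ T, StrictR e R γ (β i) := by
    intro i hi
    rw [hTdef, Finset.mem_filter] at hi
    exact ⟨hγi i, hi.2⟩
  have hTceq : ∀ i ∈ Tᶜ, β i = γ ∨ (IsImag e (β i) ∧ IsImag e γ) := by
    intro i hi
    rw [Finset.mem_compl, hTdef, Finset.mem_filter] at hi
    push_neg at hi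
    exact (hequiv (β i) γ (hβ i) hγ).mp ⟨hi (Finset.mem_univ _), hγi i⟩
  have hsplit : (∑ i ∈ T, β i) + (∑ i ∈ Tᶜ, β i) = m • γ := by
    rw [Finset.sum_add_sum_compl]
    exact hsum
  have hTsum_pos : (1:ℤ) ≤ ∑ v : ZMod e, (∑ i ∈ T, β i) v := by
    have h1 : ∑ v : ZMod e, (∑ i ∈ T, β i) v = ∑ i ∈ T, ∑ v : ZMod e, β i v := by
      rw [Finset.sum_comm]
      apply Finset.sum_congr rfl
      intro v _
      rw [Finset.sum_apply]
    rw [h1]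
    calc (1:ℤ) ≤ ∑ i ∈ T, 1 := by
          rw [Finset.sum_const, nsmul_eq_mul, mul_one]
          have : 0 < T.card := Finset.card_pos.mpr ⟨_, hlastT⟩
          exact_mod_cast this
      _ ≤ _ := Finset.sum_le_sum (fun i _ => root_val_sum he0 (hβ i))
  by_cases himγ : IsImag e γ
  · -- γ imaginary; compare with multiples of δ
    obtain ⟨c0, hc01, hγc⟩ := himγ
    have hconstTc : ∀ i ∈ Tᶜ, ∃ c:ℕ, 1 ≤ c ∧ β i = fun _ => (c:ℤ) := by
      intro i hi
      rcases hTceq i hi with h | ⟨⟨c, hc1, hce⟩, -⟩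
      · exact ⟨c0, hc01, by rw [h, hγc]⟩
      · exact ⟨c, hc1, hce⟩
    choose! c hc1 hce using hconstTc
    have hTcsum : ∑ i ∈ Tᶜ, β i = fun _ => ((∑ i ∈ Tᶜ, c i : ℕ) : ℤ) := by
      funext v
      rw [Finset.sum_apply]
      push_cast
      exact Finset.sum_congr rfl (fun i hi => by rw [hce i hi])
    set Mz : ℤ := (m : ℤ) * c0 - (∑ i ∈ Tᶜ, c i : ℕ) with hMzdef
    have hTsum : ∑ i ∈ T, β i = fun _ => Mz := by
      funext v
      have := congrFun hsplit v
      simp only [Pi.add_apply, Pi.smul_apply, nsmul_eq_mul] at this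
      rw [congrFun hTcsum v] at this
      rw [hγc] at this
      simp only at this
      rw [hMzdef]
      push_cast at this ⊢
      linarith
    have hMz1 : 1 ≤ Mz := by
      have h1 := hTsum_pos
      rw [hTsum] at h1
      rw [Finset.sum_const, nsmul_eq_mul] at h1
      have hcard : (Finset.univ : Finset (ZMod e)).card = e := by
        rw [Finset.card_univ, ZMod.card]
      rw [hcard] at h1
      by_contra hc
      push_neg at hc
      have : Mz ≤ 0 := by omega
      have he1 : (1:ℤ) ≤ (e:ℤ) := by exact_mod_cast he0
      nlinarith
    set M : ℕ := Mz.toNat with hMdef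
    have hM1 : 1 ≤ M := by omega
    have hδroot : IsPosRoot e (fun _ => (1:ℤ)) := by
      have := const_pos_root e he0 1 le_rfl
      simpa using this
    have hδimag : IsImag e (fun _ => (1:ℤ)) := ⟨1, le_rfl, by norm_num⟩
    have hγimag : IsImag e γ := ⟨c0, hc01, hγc⟩
    have hδγ : R (fun _ => (1:ℤ)) γ ∧ R γ (fun _ => (1:ℤ)) :=
      (hequiv _ _ hδroot hγ).mpr (Or.inr ⟨hδimag, hγimag⟩)
    have hMsum : (T.val.map β).sum = M • (fun _ => (1:ℤ)) := by
      have h1 : (T.val.map β).sum = ∑ i ∈ T, β i := rfl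
      rw [h1, hTsum]
      funext v
      simp only [Pi.smul_apply, nsmul_eq_mul, mul_one]
      omega
    refine key_lemma e he R hRc _ hδroot _ (T.val.map β) rfl hTne ?_ M hM1 hMsum
    intro x hx
    obtain ⟨i, hiT, rfl⟩ := Multiset.mem_map.mp hx
    rw [Finset.mem_val] at hiT
    refine ⟨hβ i, htrans _ _ _ hδroot hγ (hβ i) hδγ.1 (hγi i), fun hc => ?_⟩
    exact (hTstrict i hiT).2 (htrans (β i) (fun _ => (1:ℤ)) γ (hβ i) hδroot hγ hc hδγ.1)
  · -- γ real: all i ∉ T have β i = γ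
    have hTceq' : ∀ i ∈ Tᶜ, β i = γ := by
      intro i hi
      rcases hTceq i hi with h | ⟨-, h⟩
      · exact h
      · exact absurd h himγ
    have hTcsum : ∑ i ∈ Tᶜ, β i = Tᶜ.card • γ := by
      rw [← Finset.sum_const]
      exact Finset.sum_congr rfl hTceq'
    have hL1 : (1:ℤ) ≤ ∑ v : ZMod e, γ v := root_val_sum he0 hγ
    have hcardlt : Tᶜ.card < m := by
      have h1 := congrArg (fun f => ∑ v : ZMod e, f v) hsplit
      have h2 : ∑ v : ZMod e, ((∑ i ∈ T, β i) + (∑ i ∈ Tᶜ, β i)) v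
          = ∑ v : ZMod e, (∑ i ∈ T, β i) v + ∑ v : ZMod e, (∑ i ∈ Tᶜ, β i) v := by
        rw [← Finset.sum_add_distrib]
        apply Finset.sum_congr rfl
        intro v _
        rfl
      rw [h2] at h1
      have h3 : ∑ v : ZMod e, (∑ i ∈ Tᶜ, β i) v = (Tᶜ.card : ℤ) * ∑ v : ZMod e, γ v := by
        rw [hTcsum]
        simp only [Pi.smul_apply, nsmul_eq_mul]
        rw [← Finset.mul_sum]
      have h4 : ∑ v : ZMod e, (m • γ) v = (m:ℤ) * ∑ v : ZMod e, γ v := by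
        simp only [Pi.smul_apply, nsmul_eq_mul]
        rw [← Finset.mul_sum]
      rw [h3, h4] at h1
      by_contra hc
      push_neg at hc
      have h5 : (m:ℤ) ≤ (Tᶜ.card : ℤ) := by exact_mod_cast hc
      nlinarith [hTsum_pos]
    set M : ℕ := m - Tᶜ.card with hMdef
    have hM1 : 1 ≤ M := by omega
    have hMsum : (T.val.map β).sum = M • γ := by
      have h1 : (T.val.map β).sum = ∑ i ∈ T, β i := rfl
      have h2 : m • γ = Tᶜ.card • γ + M • γ := by
        rw [← add_nsmul]
        congr 1
        omega
      rw [h1]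
      have h3 := hsplit
      rw [hTcsum, h2] at h3
      have h4 : ∑ i ∈ T, β i + Tᶜ.card • γ = M • γ + Tᶜ.card • γ := by
        rw [h3]; abel
      exact add_right_cancel h4
    refine key_lemma e he R hRc γ hγ _ (T.val.map β) rfl hTne ?_ M hM1 hMsum
    intro x hx
    obtain ⟨i, hiT, rfl⟩ := Multiset.mem_map.mp hx
    rw [Finset.mem_val] at hiT
    exact ⟨hβ i, hTstrict i hiT⟩


theorem stmt11 (e : ℕ) (he : 1 < e)
    (R : (ZMod e → ℤ) → (ZMod e → ℤ) → Prop) (hR : ConvexPreorder e R)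
    (k m : ℕ) (hm : 1 ≤ m) (γ : ZMod e → ℤ) (hγ : IsPosRoot e γ)
    (β : Fin (k + 1) → (ZMod e → ℤ)) (hβ : ∀ i, IsPosRoot e (β i))
    (hsum : ∑ i, β i = m • γ)
    (hchain : ∀ i j : Fin (k + 1), i ≤ j → R (β i) (β j)) :
    (R (β 0) γ ∧ R γ (β (Fin.last k))) ∧
    (StrictR e R (β 0) (β (Fin.last k)) →
      StrictR e R (β 0) γ ∧ StrictR e R γ (β (Fin.last k))) := by
  have h1 := half_lemma e he R hR k m hm γ hγ β hβ hsum hchain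
  have hR' := flip_convex hR
  have hβ' : ∀ i : Fin (k+1), IsPosRoot e (β i.rev) := fun i => hβ _
  have hsum' : ∑ i : Fin (k+1), β i.rev = m • γ := by
    rw [← hsum]
    exact Fintype.sum_bijective Fin.rev Fin.rev_bijective _ _ (fun i => rfl)
  have hchain' : ∀ i j : Fin (k+1), i ≤ j →
      (fun a b => R b a) (β i.rev) (β j.rev) := fun i j hij =>
    hchain j.rev i.rev (Fin.rev_le_rev.mpr hij)
  have h2 := half_lemma e he _ hR' k m hm γ hγ (fun i => β i.rev) hβ' hsum' hchain'
  have e0 : (0 : Fin (k+1)).rev = Fin.last k := Fin.rev_zero k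
  have elast : (Fin.last k).rev = (0 : Fin (k+1)) := Fin.rev_last k
  simp only [e0, elast] at h2
  refine ⟨⟨h1.1, h2.1⟩, fun hst => ⟨h1.2 hst, ?_⟩⟩
  have hst' : R (β 0) (β (Fin.last k)) ∧ ¬ R (β (Fin.last k)) (β 0) := hst
  have := h2.2 ⟨hst'.1, hst'.2⟩
  exact ⟨this.1, this.2⟩
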